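/- Worpitzky's identity: for every natural number n and every k ≥ 1, n^k = ∑_{c=0}^{k−1} A(k,c) · binom(n + k − 1 − c, k), where A(k,c) are the Eulerian numbers. -/

import Mathlib

open Finset

section Aux
variable {k : ℕ} (σ : Equiv.Perm (Fin k))

/-- descent predicate on ℕ positions -/
def desN (j : ℕ) : Prop :=
  ∃ h : j + 1 < k, σ ⟨j + 1, h⟩ < σ ⟨j, Nat.lt_of_succ_lt h⟩

instance : DecidablePred (desN σ) := fun j => by unfold desN; infer_instance

/-- number of descents among positions `< m` -/
def dn (m : ℕ) : ℕ := ((Finset.range m).filter (desN σ)).card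

lemma dn_succ (m : ℕ) : dn σ (m + 1) = dn σ m + if desN σ m then 1 else 0 := by
  unfold dn
  rw [Finset.range_add_one, Finset.filter_insert]
  split
  · rw [Finset.card_insert_of_notMem (by simp)]
  · simp

lemma dn_le_add (m t : ℕ) : dn σ (m + t) ≤ dn σ m + t := by
  induction t with
  | zero => simp
  | succ t ih =>
    rw [← Nat.add_assoc, dn_succ]
    split <;> omega

lemma dn_mono {a b : ℕ} (h : a ≤ b) : dn σ a ≤ dn σ b :=
  Finset.card_le_card (Finset.filter_subset_filter _ (Finset.range_subset_range.2 h))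

lemma dn_le (m : ℕ) : dn σ m ≤ m := by
  have := dn_le_add σ 0 m
  simpa [dn] using this

lemma card_filter_fin (p : ℕ → Prop) [DecidablePred p] :
    ((Finset.univ : Finset (Fin k)).filter (fun i => p i.1)).card
      = ((Finset.range k).filter p).card := by
  rw [Finset.card_filter, Finset.card_filter]
  exact Fin.sum_univ_eq_sum_range (fun i => if p i then 1 else 0) k

end Aux
/-- Number of descents of a permutation of `Fin k`. -/
def descentCount {k : ℕ} (σ : Equiv.Perm (Fin k)) : ℕ :=
  (Finset.univ.filter (fun i : Fin k =>
    ∃ h : (i : ℕ) + 1 < k, σ ⟨(i : ℕ) + 1, h⟩ < σ i)).card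
section Aux2
variable {k : ℕ}

lemma descentCount_eq_dn {m : ℕ} (σ : Equiv.Perm (Fin (m + 1))) :
    descentCount σ = dn σ m := by
  have h1 : descentCount σ = ((Finset.range (m + 1)).filter (desN σ)).card := by
    rw [descentCount, Finset.card_filter, Finset.card_filter,
      ← Fin.sum_univ_eq_sum_range (fun i => if desN σ i then 1 else 0) (m + 1)]
    apply Finset.sum_congr rfl
    intro i _
    apply if_congr _ rfl rfl
    exact Iff.rfl
  rw [h1, show ((Finset.range (m+1)).filter (desN σ)).card = dn σ (m+1) from rfl,
    dn_succ]
  have : ¬ desN σ m := by rintro ⟨h, -⟩; omega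
  simp [this]

lemma descentCount_le {m : ℕ} (σ : Equiv.Perm (Fin (m + 1))) :
    descentCount σ ≤ m := by
  rw [descentCount_eq_dn]; exact dn_le σ m

lemma desN_iff {m : ℕ} (σ : Equiv.Perm (Fin (m + 1))) (j : Fin m) :
    desN σ (j : ℕ) ↔ σ j.succ < σ j.castSucc := by
  constructor
  · rintro ⟨h, hlt⟩; exact hlt
  · intro h
    have hlt : (j : ℕ) + 1 < m + 1 := by omega
    exact ⟨hlt, h⟩

lemma strictMono_gap {M : ℕ} {h : Fin k → Fin M} (hs : StrictMono h) :
    ∀ (t : ℕ) (i j : Fin k), (j : ℕ) = (i : ℕ) + t → (h i : ℕ) + t ≤ h j := by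
  intro t
  induction t with
  | zero =>
    intro i j hj
    have : i = j := Fin.ext (by omega)
    subst this; simp
  | succ t ih =>
    intro i j hj
    have hjk := j.isLt
    have hi' : (i : ℕ) + t < k := by omega
    have h1 := ih i ⟨(i : ℕ) + t, hi'⟩ rfl
    have hlt : (⟨(i : ℕ) + t, hi'⟩ : Fin k) < j := by
      rw [Fin.lt_def]; show (i : ℕ) + t < (j : ℕ); omega
    have h2 : h ⟨(i : ℕ) + t, hi'⟩ < h j := hs hlt
    rw [Fin.lt_def] at h2
    omega

open scoped Classical in
lemma card_strictMono (M k : ℕ) :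
    ((Finset.univ : Finset (Fin k → Fin M)).filter StrictMono).card = Nat.choose M k := by
  have : Nat.choose M k
      = (Finset.powersetCard k (Finset.univ : Finset (Fin M))).card := by
    rw [Finset.card_powersetCard, Finset.card_univ, Fintype.card_fin]
  rw [this]
  apply Finset.card_bij (fun f _ => Finset.image f Finset.univ)
  · intro f hf
    rw [Finset.mem_filter] at hf
    rw [Finset.mem_powersetCard_univ,
      Finset.card_image_of_injective _ hf.2.injective, Finset.card_univ, Fintype.card_fin]
  · intro f hf g hg hfg
    rw [Finset.mem_filter] at hf hg
    have hr : Set.range f = Set.range g := by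
      rw [← Set.image_univ, ← Set.image_univ, ← Finset.coe_univ, ← Finset.coe_image,
        ← Finset.coe_image, hfg]
    haveI : WellFoundedLT (Fin k) := inferInstance
    exact (StrictMono.range_inj hf.2 hg.2).1 hr
  · intro s hs
    rw [Finset.mem_powersetCard_univ] at hs
    refine ⟨(s.orderEmbOfFin hs : Fin k → Fin M), ?_, ?_⟩
    · rw [Finset.mem_filter]
      exact ⟨Finset.mem_univ _, (s.orderEmbOfFin hs).strictMono⟩
    · ext x
      simp only [Finset.mem_image, Finset.mem_univ, true_and]
      constructor
      · rintro ⟨i, rfl⟩; exact Finset.orderEmbOfFin_mem s hs i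
      · intro hx
        have := Finset.range_orderEmbOfFin s hs
        have : x ∈ Set.range (s.orderEmbOfFin hs) := by rw [this]; exact hx
        obtain ⟨i, hi⟩ := this
        exact ⟨i, hi⟩

end Aux2
section Aux3
variable {n m : ℕ}

lemma ties_of_adj (σ : Equiv.Perm (Fin (m + 1))) {g : Fin (m + 1) → Fin n}
    (hmono : Monotone g)
    (hstrict : ∀ j : Fin m, σ j.succ < σ j.castSucc → g j.castSucc < g j.succ) :
    ∀ i j : Fin (m + 1), i < j → g i = g j → σ i < σ j := by
  have adj : ∀ j0 : Fin m, g j0.castSucc = g j0.succ → σ j0.castSucc < σ j0.succ := by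
    intro j0 he
    rcases lt_trichotomy (σ j0.castSucc) (σ j0.succ) with h | h | h
    · exact h
    · exfalso
      have := σ.injective h
      rw [Fin.ext_iff] at this
      simp at this
    · exact absurd he (ne_of_lt (hstrict j0 h))
  have base : ∀ i j : Fin (m + 1), (j : ℕ) = (i : ℕ) + 1 → g i = g j → σ i < σ j := by
    intro i j hj he
    have hi : (i : ℕ) < m := by have := j.isLt; omega
    have e1 : (⟨(i : ℕ), hi⟩ : Fin m).castSucc = i := by ext; rfl
    have e2 : (⟨(i : ℕ), hi⟩ : Fin m).succ = j := by ext; simp [hj]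
    rw [← e1, ← e2]
    apply adj
    rw [e1, e2]; exact he
  have main : ∀ t : ℕ, ∀ i j : Fin (m + 1), (j : ℕ) = (i : ℕ) + t + 1 →
      g i = g j → σ i < σ j := by
    intro t
    induction t with
    | zero => exact fun i j hj he => base i j hj he
    | succ t ih =>
      intro i j hj he
      have hmid : (i : ℕ) + t + 1 < m + 1 := by have := j.isLt; omega
      set mid : Fin (m + 1) := ⟨(i : ℕ) + t + 1, hmid⟩ with hmiddef
      have hle1 : i ≤ mid := by rw [Fin.le_def]; show (i : ℕ) ≤ (i : ℕ) + t + 1; omega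
      have hle2 : mid ≤ j := by rw [Fin.le_def]; show (i : ℕ) + t + 1 ≤ (j : ℕ); omega
      have h1 : g i ≤ g mid := hmono hle1
      have h2 : g mid ≤ g j := hmono hle2
      have e1 : g i = g mid := le_antisymm h1 (he ▸ h2)
      have e2 : g mid = g j := le_antisymm h2 (he ▸ h1)
      exact (ih i mid rfl e1).trans (base mid j (by simp [hmiddef]; omega) e2)
  intro i j hlt he
  rw [Fin.lt_def] at hlt
  exact main ((j : ℕ) - (i : ℕ) - 1) i j (by omega) he

end Aux3
section Fiber
variable {n m : ℕ}

open scoped Classical in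
lemma fiber_card (hn : 1 ≤ n) (σ : Equiv.Perm (Fin (m + 1))) :
    ((Finset.univ : Finset (Fin (m + 1) → Fin n)).filter
      (fun f => Tuple.sort f = σ)).card
      = Nat.choose (n + (m - dn σ m)) (m + 1) := by
  set c := dn σ m with hc
  have hcm : c ≤ m := dn_le σ m
  set M := n + (m - c) with hM
  have hbound1 : ∀ (f : Fin (m + 1) → Fin n) (idx : Fin (m + 1)),
      (f (σ idx) : ℕ) + ((idx : ℕ) - dn σ (idx : ℕ)) < M := by
    intro f idx
    have h1 : (f (σ idx) : ℕ) < n := (f (σ idx)).isLt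
    have h2 : dn σ (idx : ℕ) ≤ (idx : ℕ) := dn_le σ _
    have h3 : (idx : ℕ) ≤ m := by have := idx.isLt; omega
    have h4 : c ≤ dn σ (idx : ℕ) + (m - (idx : ℕ)) := by
      have h5 := dn_le_add σ (idx : ℕ) (m - (idx : ℕ))
      rw [show (idx : ℕ) + (m - (idx : ℕ)) = m from by omega] at h5
      exact h5
    omega
  set last : Fin (m + 1) := ⟨m, Nat.lt_succ_self m⟩ with hlastdef
  have hbound2 : ∀ (h : Fin (m + 1) → Fin M), StrictMono h → ∀ i : Fin (m + 1),
      (h i : ℕ) - ((i : ℕ) - dn σ (i : ℕ)) < n := by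
    intro h hh i
    have h3 : (i : ℕ) ≤ m := by have := i.isLt; omega
    have hgap := strictMono_gap hh (m - (i : ℕ)) i last (by show m = (i : ℕ) + _; omega)
    have h0 : (h last : ℕ) < M := (h last).isLt
    have h2 : dn σ (i : ℕ) ≤ (i : ℕ) := dn_le σ _
    have h2' : dn σ (i : ℕ) ≤ c := dn_mono σ h3
    omega
  rw [← card_strictMono M (m + 1)]
  refine Finset.card_bij'
    (fun f _ => fun idx => (⟨(f (σ idx) : ℕ) + ((idx : ℕ) - dn σ (idx : ℕ)),
      hbound1 f idx⟩ : Fin M))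
    (fun h hh => fun x => (⟨(h (σ⁻¹ x) : ℕ) - (((σ⁻¹ x : Fin (m + 1)) : ℕ) - dn σ ((σ⁻¹ x : Fin (m + 1)) : ℕ)),
      hbound2 h (Finset.mem_filter.1 hh).2 (σ⁻¹ x)⟩ : Fin n))
    ?_ ?_ ?_ ?_
  · -- forward map is strictly monotone
    intro f hf
    rw [Finset.mem_filter] at hf ⊢
    refine ⟨Finset.mem_univ _, ?_⟩
    obtain ⟨hmono, hties⟩ := Tuple.eq_sort_iff.1 hf.2.symm
    rw [Fin.strictMono_iff_lt_succ]
    intro j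
    rw [Fin.lt_def]
    simp only [Fin.coe_castSucc, Fin.val_succ]
    have hd := dn_succ σ (j : ℕ)
    have hdle := dn_le σ (j : ℕ)
    by_cases hdes : desN σ (j : ℕ)
    · have hσ : σ j.succ < σ j.castSucc := (desN_iff σ j).1 hdes
      have hle : f (σ j.castSucc) ≤ f (σ j.succ) :=
        hmono (Fin.castSucc_le_succ j)
      have hlt : (f (σ j.castSucc) : ℕ) < (f (σ j.succ) : ℕ) := by
        rcases eq_or_lt_of_le hle with he | hl
        · exact absurd (hties j.castSucc j.succ (Fin.castSucc_lt_succ (i := j)) he) (asymm hσ)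
        · exact hl
      rw [if_pos hdes] at hd
      omega
    · have hle : (f (σ j.castSucc) : ℕ) ≤ (f (σ j.succ) : ℕ) :=
        hmono (Fin.castSucc_le_succ j)
      rw [if_neg hdes] at hd
      omega
  · -- backward map is in the fiber
    intro h hh
    have hS : StrictMono h := (Finset.mem_filter.1 hh).2
    rw [Finset.mem_filter]
    refine ⟨Finset.mem_univ _, ?_⟩
    refine (Tuple.eq_sort_iff.2 ⟨?_, ?_⟩).symm
    · -- monotone
      rw [Fin.monotone_iff_le_succ]
      intro j
      rw [Fin.le_def]
      simp only [Function.comp_apply, Equiv.Perm.coe_inv, Equiv.symm_apply_apply]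
      simp only [Fin.coe_castSucc, Fin.val_succ]
      have hd := dn_succ σ (j : ℕ)
      have hdle := dn_le σ (j : ℕ)
      have hlt : (h j.castSucc : ℕ) < (h j.succ : ℕ) := hS (Fin.castSucc_lt_succ (i := j))
      by_cases hdes : desN σ (j : ℕ)
      · rw [if_pos hdes] at hd; omega
      · rw [if_neg hdes] at hd; omega
    · -- ties
      apply ties_of_adj σ
      · rw [Fin.monotone_iff_le_succ]
        intro j
        rw [Fin.le_def]
        simp only [Function.comp_apply, Equiv.Perm.coe_inv, Equiv.symm_apply_apply]
        simp only [Fin.coe_castSucc, Fin.val_succ]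
        have hd := dn_succ σ (j : ℕ)
        have hdle := dn_le σ (j : ℕ)
        have hlt : (h j.castSucc : ℕ) < (h j.succ : ℕ) := hS (Fin.castSucc_lt_succ (i := j))
        by_cases hdes : desN σ (j : ℕ)
        · rw [if_pos hdes] at hd; omega
        · rw [if_neg hdes] at hd; omega
      · intro j hσ
        have hdes : desN σ (j : ℕ) := (desN_iff σ j).2 hσ
        rw [Fin.lt_def]
        simp only [Function.comp_apply, Equiv.Perm.coe_inv, Equiv.symm_apply_apply]
        simp only [Fin.coe_castSucc, Fin.val_succ]
        have hd := dn_succ σ (j : ℕ)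
        have hdle := dn_le σ (j : ℕ)
        have hlt : (h j.castSucc : ℕ) < (h j.succ : ℕ) := hS (Fin.castSucc_lt_succ (i := j))
        have hge := strictMono_gap hS ((j : ℕ) + 1) ⟨0, Nat.succ_pos m⟩ j.succ
          (by simp)
        rw [if_pos hdes] at hd
        omega
  · -- left inverse
    intro f hf
    funext x
    ext
    simp only [Equiv.Perm.coe_inv, Equiv.apply_symm_apply]
    omega
  · -- right inverse
    intro h hh
    have hS : StrictMono h := (Finset.mem_filter.1 hh).2
    funext idx
    ext
    simp only [Equiv.Perm.coe_inv, Equiv.symm_apply_apply]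
    have hge := strictMono_gap hS (idx : ℕ) ⟨0, Nat.succ_pos m⟩ idx (by simp)
    have h2 : dn σ (idx : ℕ) ≤ (idx : ℕ) := dn_le σ _
    omega

end Fiber

/-- The Eulerian number `A(k,c)`: the number of permutations of `{1,…,k}` with
exactly `c` descents. -/
def eulerian (k c : ℕ) : ℕ :=
  (Finset.univ.filter (fun σ : Equiv.Perm (Fin k) => descentCount σ = c)).card

/-- Worpitzky's identity: `n^k = ∑_{c=0}^{k−1} A(k,c) · C(n+k−1−c, k)`. -/
theorem worpitzky (n k : ℕ) (hk : 1 ≤ k) :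
    n ^ k = ∑ c ∈ Finset.range k, eulerian k c * Nat.choose (n + k - 1 - c) k := by
  obtain ⟨m, rfl⟩ : ∃ m, k = m + 1 := ⟨k - 1, by omega⟩
  rcases Nat.eq_zero_or_pos n with rfl | hn
  · rw [zero_pow (by omega)]
    symm
    apply Finset.sum_eq_zero
    intro c hc
    rw [Finset.mem_range] at hc
    rw [Nat.choose_eq_zero_of_lt (by omega), Nat.mul_zero]
  · classical
    have hcard : n ^ (m + 1) = (Finset.univ : Finset (Fin (m + 1) → Fin n)).card := by
      rw [Finset.card_univ, Fintype.card_fun, Fintype.card_fin, Fintype.card_fin]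
    rw [hcard]
    rw [Finset.card_eq_sum_card_fiberwise (f := fun f => Tuple.sort f)
      (t := Finset.univ) (fun f _ => Finset.mem_univ _)]
    have step : ∀ σ : Equiv.Perm (Fin (m + 1)),
        ((Finset.univ : Finset (Fin (m + 1) → Fin n)).filter
          (fun f => Tuple.sort f = σ)).card
          = Nat.choose (n + (m + 1) - 1 - descentCount σ) (m + 1) := by
      intro σ
      rw [show ((Finset.univ : Finset (Fin (m + 1) → Fin n)).filter
          (fun f => Tuple.sort f = σ)).card
          = Nat.choose (n + (m - dn σ m)) (m + 1) from fiber_card hn σ]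
      congr 1
      have h1 := descentCount_le σ
      have h2 := descentCount_eq_dn σ
      omega
    rw [Finset.sum_congr rfl (fun σ _ => step σ)]
    rw [← Finset.sum_fiberwise_of_maps_to (g := descentCount)
      (t := Finset.range (m + 1))
      (fun σ _ => Finset.mem_range.2 (Nat.lt_succ_of_le (descentCount_le σ)))]
    apply Finset.sum_congr rfl
    intro c hc
    rw [show ∑ σ ∈ Finset.univ.filter (fun σ : Equiv.Perm (Fin (m + 1)) =>
        descentCount σ = c), Nat.choose (n + (m + 1) - 1 - descentCount σ) (m + 1)
        = ∑ σ ∈ Finset.univ.filter (fun σ : Equiv.Perm (Fin (m + 1)) =>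
        descentCount σ = c), Nat.choose (n + (m + 1) - 1 - c) (m + 1) from
      Finset.sum_congr rfl (fun σ hσ => by rw [(Finset.mem_filter.1 hσ).2])]
    rw [Finset.sum_const, smul_eq_mul, eulerian]
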